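/- Let Θ ∈ (0, π) be fixed and consider the degenerate two-circle configuration: ϑ_i, ϑ_j ∈ (0, π) with ϑ_i + ϑ_j + Θ < π determine r_i, r_j > 0 by cosh r_i = (cos ϑ_j − cos Θ cos ϑ_i)/(sin Θ sin ϑ_i) and cosh r_j = (cos ϑ_i − cos Θ cos ϑ_j)/(sin Θ sin ϑ_j). Then the map (ϑ_i, ϑ_j) ↦ (r_i, r_j) is injective on the domain where the right-hand sides exceed 1. -/

import Mathlib

open Real

/-- Inverse hyperbolic cosine (for `x ≥ 1`). -/
noncomputable def arcosh (x : ℝ) : ℝ := Real.log (x + Real.sqrt (x ^ 2 - 1))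

/-- The hyperbolic cosine of the radius `r_i`, as a function of the two inner
angles `(ϑi, ϑj)` in the degenerate two-circle configuration with fixed
exterior intersection angle `Θ` (second hyperbolic cosine law). -/
noncomputable def coshRadius (Θ ϑi ϑj : ℝ) : ℝ :=
  (Real.cos ϑj - Real.cos Θ * Real.cos ϑi) / (Real.sin Θ * Real.sin ϑi)

lemma arcosh_strictMonoOn : StrictMonoOn _root_.arcosh (Set.Ici 1) := by
  intro a ha b hb hab
  simp only [Set.mem_Ici] at ha hb
  unfold _root_.arcosh
  apply Real.log_lt_log
  · have h0 : (0:ℝ) < a := by linarith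
    positivity
  · have : Real.sqrt (a^2-1) ≤ Real.sqrt (b^2-1) := by
      apply Real.sqrt_le_sqrt; nlinarith
    linarith

lemma key (Θ x y : ℝ) (hΘ : Θ ∈ Set.Ioo 0 π) (hx : x ∈ Set.Ioo 0 π)
    (hy : y ∈ Set.Ioo 0 π) (hA : 1 < coshRadius Θ x y) (hB : 1 < coshRadius Θ y x) :
    Real.sqrt ((coshRadius Θ y x)^2 - 1) * Real.sin Θ * Real.cos x
      = (Real.cos Θ * coshRadius Θ x y * Real.sqrt ((coshRadius Θ y x)^2 - 1)
         + coshRadius Θ y x * Real.sqrt ((coshRadius Θ x y)^2 - 1)) * Real.sin x := by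
  set A := coshRadius Θ x y with hAdef
  set B := coshRadius Θ y x with hBdef
  have hs : 0 < Real.sin Θ := Real.sin_pos_of_pos_of_lt_pi hΘ.1 hΘ.2
  have hsx : 0 < Real.sin x := Real.sin_pos_of_pos_of_lt_pi hx.1 hx.2
  have hsy : 0 < Real.sin y := Real.sin_pos_of_pos_of_lt_pi hy.1 hy.2
  set c := Real.cos Θ
  set s := Real.sin Θ
  have h1 : Real.cos y - c * Real.cos x = A * (s * Real.sin x) := by
    rw [hAdef]; unfold coshRadius
    field_simp
    rw [mul_div_assoc, div_self hs.ne']; simp only [c, s]; ring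
  have h2 : Real.cos x - c * Real.cos y = B * (s * Real.sin y) := by
    rw [hBdef]; unfold coshRadius
    field_simp
    rw [mul_div_assoc, div_self hs.ne']; simp only [c, s]; ring
  have px : Real.sin x ^ 2 + Real.cos x ^ 2 = 1 := Real.sin_sq_add_cos_sq x
  have py : Real.sin y ^ 2 + Real.cos y ^ 2 = 1 := Real.sin_sq_add_cos_sq y
  have hcs : s ^ 2 + c ^ 2 = 1 := Real.sin_sq_add_cos_sq Θ
  have key2 : s^2 * ((B^2-1) * Real.sin y^2) = s^2 * ((A^2-1) * Real.sin x^2) := by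
    linear_combination (A*s*Real.sin x + Real.cos y - c*Real.cos x) * h1
      - (B*s*Real.sin y + Real.cos x - c*Real.cos y) * h2
      - (Real.cos x^2 - Real.cos y^2) * hcs + s^2 * (px - py)
  have hID : (B^2-1) * Real.sin y^2 = (A^2-1) * Real.sin x^2 :=
    mul_left_cancel₀ (by positivity) key2
  have hB1 : (0:ℝ) ≤ B^2 - 1 := by nlinarith
  have hA1 : (0:ℝ) ≤ A^2 - 1 := by nlinarith
  have hS : Real.sqrt (B^2-1) * Real.sin y = Real.sqrt (A^2-1) * Real.sin x := by
    calc Real.sqrt (B^2-1) * Real.sin y = Real.sqrt ((B^2-1) * Real.sin y^2) := by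
          rw [Real.sqrt_mul hB1, Real.sqrt_sq hsy.le]
      _ = Real.sqrt ((A^2-1) * Real.sin x^2) := by rw [hID]
      _ = Real.sqrt (A^2-1) * Real.sin x := by
          rw [Real.sqrt_mul hA1, Real.sqrt_sq hsx.le]
  have h3 : s * Real.cos x - c * A * Real.sin x = B * Real.sin y := by
    apply mul_left_cancel₀ hs.ne'
    linear_combination h2 + c * h1 + Real.cos x * hcs
  linear_combination Real.sqrt (B^2-1) * h3 + B * hS

lemma eq_of_cot (x y K L : ℝ) (hx : x ∈ Set.Ioo 0 π) (hy : y ∈ Set.Ioo 0 π)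
    (hK : K ≠ 0) (h1 : K * Real.cos x = L * Real.sin x)
    (h2 : K * Real.cos y = L * Real.sin y) : x = y := by
  have h0 : K * (Real.sin x * Real.cos y - Real.cos x * Real.sin y) = 0 := by
    linear_combination Real.sin x * h2 - Real.sin y * h1
  have h0' := (mul_eq_zero.mp h0).resolve_left hK
  have hsub : Real.sin (x - y) = 0 := by rw [Real.sin_sub]; linarith
  have hlt1 : -π < x - y := by have := hx.1; have := hy.2; linarith
  have hlt2 : x - y < π := by have := hx.2; have := hy.1; linarith
  have := (Real.sin_eq_zero_iff_of_lt_of_lt hlt1 hlt2).mp hsub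
  linarith

theorem two_circle_configuration_injective
    (Θ : ℝ) (hΘ : Θ ∈ Set.Ioo 0 π) :
    Set.InjOn
      (fun p : ℝ × ℝ =>
        (_root_.arcosh (coshRadius Θ p.1 p.2), _root_.arcosh (coshRadius Θ p.2 p.1)))
      {p : ℝ × ℝ | p.1 ∈ Set.Ioo 0 π ∧ p.2 ∈ Set.Ioo 0 π ∧ p.1 + p.2 + Θ < π ∧
        1 < coshRadius Θ p.1 p.2 ∧ 1 < coshRadius Θ p.2 p.1} := by
  rintro p ⟨hp1, hp2, -, hpA, hpB⟩ q ⟨hq1, hq2, -, hqA, hqB⟩ h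
  simp only [Prod.mk.injEq] at h
  have hAeq : coshRadius Θ p.1 p.2 = coshRadius Θ q.1 q.2 :=
    arcosh_strictMonoOn.injOn hpA.le hqA.le h.1
  have hBeq : coshRadius Θ p.2 p.1 = coshRadius Θ q.2 q.1 :=
    arcosh_strictMonoOn.injOn hpB.le hqB.le h.2
  set A := coshRadius Θ p.1 p.2
  set B := coshRadius Θ p.2 p.1
  have hs : 0 < Real.sin Θ := Real.sin_pos_of_pos_of_lt_pi hΘ.1 hΘ.2
  have hB1 : (0:ℝ) < Real.sqrt (B^2 - 1) := Real.sqrt_pos.mpr (by nlinarith)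
  have hA1 : (0:ℝ) < Real.sqrt (A^2 - 1) := Real.sqrt_pos.mpr (by nlinarith)
  have keyP := key Θ p.1 p.2 hΘ hp1 hp2 hpA hpB
  have keyQ := key Θ q.1 q.2 hΘ hq1 hq2 hqA hqB
  rw [← hAeq, ← hBeq] at keyQ
  have keyP' := key Θ p.2 p.1 hΘ hp2 hp1 hpB hpA
  have keyQ' := key Θ q.2 q.1 hΘ hq2 hq1 hqB hqA
  rw [← hAeq, ← hBeq] at keyQ'
  have e1 : p.1 = q.1 := by
    apply eq_of_cot p.1 q.1 (Real.sqrt (B^2-1) * Real.sin Θ)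
      (Real.cos Θ * A * Real.sqrt (B^2-1) + B * Real.sqrt (A^2-1)) hp1 hq1
      (by positivity) keyP keyQ
  have e2 : p.2 = q.2 := by
    apply eq_of_cot p.2 q.2 (Real.sqrt (A^2-1) * Real.sin Θ)
      (Real.cos Θ * B * Real.sqrt (A^2-1) + A * Real.sqrt (B^2-1)) hp2 hq2
      (by positivity) keyP' keyQ'
  exact Prod.ext e1 e2
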